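/- With α_p as above and d ≥ 2, |α₁² − α₀α₂| ≤ 1/(2d). -/

import Mathlib

open Finset

lemma aux1 (d s : ℕ) (hs : s ≤ d) : (d - s) * d.choose s = d * (d-1).choose s := by
  rcases Nat.eq_or_lt_of_le hs with rfl | h
  · rcases Nat.eq_zero_or_pos s with rfl | hdpos
    · simp
    · rw [Nat.sub_self, Nat.choose_eq_zero_of_lt (by omega : s - 1 < s)]; ring
  · obtain ⟨m, rfl⟩ : ∃ m, d = s + m + 1 := ⟨d - s - 1, by omega⟩
    have h1 := Nat.add_one_mul_choose_eq (s + m) m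
    have hsym : (s + m + 1).choose (m + 1) = (s + m + 1).choose s := by
      rw [← Nat.choose_symm (by omega : m + 1 ≤ s + m + 1)]
      congr 1; omega
    have hsym2 : (s + m).choose m = (s + m).choose s := by
      rw [← Nat.choose_symm (by omega : m ≤ s + m)]
      congr 1; omega
    have e1 : (s + m + 1 - s) = m + 1 := by omega
    have e2 : (s + m + 1 - 1) = s + m := by omega
    rw [e1, e2]
    simp only [Nat.succ_eq_add_one, hsym, hsym2] at h1
    rw [h1]; ring

lemma sumS1 (n : ℕ) : ∑ s ∈ range (n + 2), s * (n+1).choose s = (n+1) * 2^n := by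
  rw [Finset.sum_range_succ']
  have h : ∀ k, (k+1) * (n+1).choose (k+1) = (n+1) * n.choose k := by
    intro k
    have := Nat.add_one_mul_choose_eq n k
    rw [this]; ring
  simp [h, ← Finset.mul_sum, Nat.sum_range_choose]

lemma sumS2 (n : ℕ) : ∑ s ∈ range (n + 3), s * s * (n+2).choose s = (n+2)*(n+3) * 2^n := by
  rw [Finset.sum_range_succ']
  have h : ∀ k, (k+1) * (k+1) * (n+2).choose (k+1) = (n+2) * ((k+1) * (n+1).choose k) := by
    intro k
    have := Nat.add_one_mul_choose_eq (n+1) k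
    calc (k+1) * (k+1) * (n+2).choose (k+1) = (k+1) * ((n+1+1) * (n+1).choose k) := by
          rw [this]; ring
      _ = (n+2) * ((k+1) * (n+1).choose k) := by ring
  have h2 : ∑ k ∈ range (n + 2), (k+1) * (n+1).choose k
      = ∑ k ∈ range (n + 2), k * (n+1).choose k + ∑ k ∈ range (n + 2), (n+1).choose k := by
    rw [← Finset.sum_add_distrib]
    congr 1; ext k; ring
  simp only [h, ← Finset.mul_sum, h2, sumS1, Nat.sum_range_choose]
  ring

lemma double (F : Finset ℕ) (u v : ℕ → ℝ) :
    ∑ s ∈ F, ∑ t ∈ F, u s * u t * (v s - v t)^2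
      = 2 * ((∑ s ∈ F, u s) * (∑ s ∈ F, u s * v s^2) - (∑ s ∈ F, u s * v s)^2) := by
  have h : ∀ s t, u s * u t * (v s - v t)^2 =
      (u s * v s^2) * u t - 2 * ((u s * v s) * (u t * v t)) + u s * (u t * v t^2) := by
    intros; ring
  simp only [h, Finset.sum_add_distrib, Finset.sum_sub_distrib, ← Finset.sum_mul, ← Finset.mul_sum]
  ring

set_option maxHeartbeats 1000000 in
theorem stmt10 (d : ℕ) (hd : 2 ≤ d) (ν : ℝ) (hν : 0 < ν)
    (ψ : ℝ → ℝ)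
    (hψ : ∀ t, ψ t = Real.exp (-(1 - Real.sqrt (1 - t)) ^ 2 / (2 * ν ^ 2)))
    (α : ℕ → ℝ)
    (hα : ∀ p, α p = (1 / 2 ^ d) *
      ∑ s ∈ Finset.range (d + 1), (Nat.choose (d - p) s : ℝ) * ψ ((s : ℝ) / d)) :
    |α 1 ^ 2 - α 0 * α 2| ≤ 1 / (2 * d) := by
  obtain ⟨e, rfl⟩ : ∃ e, d = e + 2 := ⟨d - 2, by omega⟩
  clear hd
  -- bounds on ψ
  have hψ0 : ∀ t : ℝ, 0 ≤ ψ t := by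
    intro t; rw [hψ]; positivity
  have hψ1 : ∀ t : ℝ, ψ t ≤ 1 := by
    intro t; rw [hψ, Real.exp_le_one_iff]
    apply div_nonpos_of_nonpos_of_nonneg
    · simpa using sq_nonneg (1 - Real.sqrt (1 - t))
    · positivity
  set D : ℝ := ((e + 2 : ℕ) : ℝ) with hD
  have hDval : D = (e : ℝ) + 2 := by push_cast [hD]; ring
  have hD2 : (2:ℝ) ≤ D := by
    rw [hDval]; have : (0:ℝ) ≤ (e:ℝ) := Nat.cast_nonneg e; linarith
  have hDpos : (0:ℝ) < D := by linarith
  have hD1 : (0:ℝ) < D - 1 := by linarith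
  set R : Finset ℕ := Finset.range (e + 3) with hRdef
  set c : ℕ → ℝ := fun s => ((e+2).choose s : ℝ) with hc
  set w : ℕ → ℝ := fun s => ((e+2).choose s : ℝ) * ψ ((s : ℝ) / D) with hw
  have hw0 : ∀ s, 0 ≤ w s := by
    intro s; exact mul_nonneg (Nat.cast_nonneg _) (hψ0 _)
  have hwc : ∀ s, w s ≤ c s := by
    intro s
    calc w s ≤ ((e+2).choose s : ℝ) * 1 := by
          apply mul_le_mul_of_nonneg_left (hψ1 _) (Nat.cast_nonneg _)
      _ = c s := by rw [mul_one, hc]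
  have hc0 : ∀ s, 0 ≤ c s := fun s => Nat.cast_nonneg _
  set A : ℝ := ∑ s ∈ R, w s with hA
  set B : ℝ := ∑ s ∈ R, w s * (D - s) with hB
  set C2 : ℝ := ∑ s ∈ R, w s * (D - s)^2 with hC2
  -- cast identities
  have key1 : ∀ s ∈ R, (D - (s:ℝ)) * c s = D * (((e+1).choose s : ℕ) : ℝ) := by
    intro s hs
    have hs' : s ≤ e + 2 := by
      rw [hRdef, Finset.mem_range] at hs; omega
    have h := aux1 (e+2) s hs'
    have e2 : (e + 2 - 1) = e + 1 := by omega
    rw [e2] at h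
    have hcast : ((e + 2 - s : ℕ) : ℝ) = D - s := by
      rw [hD]; push_cast [hs']; ring
    rw [hc]
    calc (D - (s:ℝ)) * ((e+2).choose s : ℝ) = ((e + 2 - s : ℕ) : ℝ) * ((e+2).choose s : ℝ) := by
          rw [hcast]
      _ = (((e + 2 - s) * (e+2).choose s : ℕ) : ℝ) := by push_cast; ring
      _ = (((e + 2) * (e+1).choose s : ℕ) : ℝ) := by rw [h]
      _ = D * (((e+1).choose s : ℕ) : ℝ) := by rw [hD]; push_cast; ring
  have key1' : ∀ s, s ≤ e + 1 → (D - 1 - (s:ℝ)) * (((e+1).choose s : ℕ) : ℝ)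
      = (D - 1) * ((e.choose s : ℕ) : ℝ) := by
    intro s hs'
    have h := aux1 (e+1) s hs'
    have e2 : (e + 1 - 1) = e := by omega
    rw [e2] at h
    have hcast : ((e + 1 - s : ℕ) : ℝ) = D - 1 - s := by
      rw [hD]; push_cast [hs']; ring
    calc (D - 1 - (s:ℝ)) * (((e+1).choose s : ℕ) : ℝ)
        = (((e + 1 - s) * (e+1).choose s : ℕ) : ℝ) := by push_cast [← hcast]; ring
      _ = (((e + 1) * e.choose s : ℕ) : ℝ) := by rw [h]
      _ = (D - 1) * ((e.choose s : ℕ) : ℝ) := by rw [hD]; push_cast; ring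
  have key2 : ∀ s ∈ R, (D - (s:ℝ)) * ((D - (s:ℝ)) - 1) * c s
      = D * (D - 1) * ((e.choose s : ℕ) : ℝ) := by
    intro s hs
    by_cases hs2 : s ≤ e + 1
    · have k1 := key1 s hs
      calc (D - (s:ℝ)) * ((D - (s:ℝ)) - 1) * c s
          = ((D - (s:ℝ)) - 1) * ((D - (s:ℝ)) * c s) := by ring
        _ = ((D - (s:ℝ)) - 1) * (D * (((e+1).choose s : ℕ) : ℝ)) := by rw [k1]
        _ = D * ((D - 1 - (s:ℝ)) * (((e+1).choose s : ℕ) : ℝ)) := by ring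
        _ = D * ((D - 1) * ((e.choose s : ℕ) : ℝ)) := by rw [key1' s hs2]
        _ = D * (D - 1) * ((e.choose s : ℕ) : ℝ) := by ring
    · have hse : s = e + 2 := by
        rw [hRdef, Finset.mem_range] at hs; omega
      subst hse
      have h1 : (D - ((e + 2 : ℕ):ℝ)) = 0 := by rw [hD]; ring
      have h2 : e.choose (e + 2) = 0 := Nat.choose_eq_zero_of_lt (by omega)
      rw [h1, h2]
      simp
  -- expressions for α
  have e0 : α 0 * (2:ℝ)^(e+2) = A := by
    rw [hα 0, hA]
    have : (e + 2 - 0) = e + 2 := by omega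
    rw [this]
    have hne : ((2:ℝ))^(e+2) ≠ 0 := by positivity
    field_simp
    rfl
  have e1 : α 1 * ((2:ℝ)^(e+2) * D) = B := by
    rw [hα 1, hB]
    have h21 : (e + 2 - 1) = e + 1 := by omega
    rw [h21]
    have hne : ((2:ℝ))^(e+2) ≠ 0 := by positivity
    rw [show (1 / 2 ^ (e+2) * ∑ s ∈ Finset.range (e + 2 + 1), (((e+1).choose s : ℕ) : ℝ) * ψ ((s:ℝ) / ((e+2:ℕ):ℝ))) * (2^(e+2) * D) = D * ∑ s ∈ Finset.range (e + 2 + 1), (((e+1).choose s : ℕ) : ℝ) * ψ ((s:ℝ) / ((e+2:ℕ):ℝ)) from by field_simp]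
    rw [Finset.mul_sum]
    apply Finset.sum_congr rfl
    intro s hs
    have hsR : s ∈ R := by rw [hRdef]; exact hs
    have k1 := key1 s hsR
    rw [hw, ← hD]
    calc D * ((((e+1).choose s : ℕ) : ℝ) * ψ ((s:ℝ) / D))
        = (D * (((e+1).choose s : ℕ) : ℝ)) * ψ ((s:ℝ) / D) := by ring
      _ = ((D - (s:ℝ)) * c s) * ψ ((s:ℝ) / D) := by rw [k1]
      _ = c s * ψ ((s:ℝ) / D) * (D - s) := by ring
  have e2 : α 2 * ((2:ℝ)^(e+2) * (D * (D - 1))) = C2 - B := by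
    rw [hα 2]
    have h22 : (e + 2 - 2) = e := by omega
    rw [h22]
    have hne : ((2:ℝ))^(e+2) ≠ 0 := by positivity
    rw [show (1 / 2 ^ (e+2) * ∑ s ∈ Finset.range (e + 2 + 1), ((e.choose s : ℕ) : ℝ) * ψ ((s:ℝ) / ((e+2:ℕ):ℝ))) * (2^(e+2) * (D * (D-1))) = D * (D-1) * ∑ s ∈ Finset.range (e + 2 + 1), ((e.choose s : ℕ) : ℝ) * ψ ((s:ℝ) / ((e+2:ℕ):ℝ)) from by field_simp]
    rw [Finset.mul_sum, hC2, hB, ← Finset.sum_sub_distrib]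
    apply Finset.sum_congr rfl
    intro s hs
    have hsR : s ∈ R := by rw [hRdef]; exact hs
    have k2 := key2 s hsR
    rw [hw, ← hD]
    calc D * (D - 1) * (((e.choose s : ℕ) : ℝ) * ψ ((s:ℝ) / D))
        = (D * (D - 1) * ((e.choose s : ℕ) : ℝ)) * ψ ((s:ℝ) / D) := by ring
      _ = ((D - (s:ℝ)) * ((D - (s:ℝ)) - 1) * c s) * ψ ((s:ℝ) / D) := by rw [k2]
      _ = c s * ψ ((s:ℝ) / D) * (D - s)^2 - c s * ψ ((s:ℝ) / D) * (D - s) := by ring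
  -- basic facts
  have hcast : ∀ s ∈ R, (s : ℝ) ≤ D := by
    intro s hs
    rw [hRdef, Finset.mem_range] at hs
    rw [hD]; exact_mod_cast (by omega : s ≤ e + 2)
  have hA0 : 0 ≤ A := by
    rw [hA]; exact Finset.sum_nonneg fun s _ => hw0 s
  have hsum : ∑ s ∈ R, c s = (2:ℝ)^(e+2) := by
    rw [hc, hRdef, show e + 3 = e + 2 + 1 from by omega]
    beta_reduce
    exact_mod_cast Nat.sum_range_choose (e+2)
  have hA1 : A ≤ (2:ℝ)^(e+2) := by
    rw [hA, ← hsum]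
    exact Finset.sum_le_sum fun s _ => hwc s
  have hB0 : 0 ≤ B := by
    rw [hB]
    apply Finset.sum_nonneg
    intro s hs
    exact mul_nonneg (hw0 s) (by linarith [hcast s hs])
  have hBA : B ≤ D * A := by
    rw [hB, hA, Finset.mul_sum]
    apply Finset.sum_le_sum
    intro s hs
    nlinarith [hw0 s, Nat.cast_nonneg (α := ℝ) s]
  have hCS : B^2 ≤ A * C2 := by
    rw [hA, hB, hC2]
    apply Finset.sum_sq_le_sum_mul_sum_of_sq_eq_mul
    · intro i _; exact hw0 i
    · intro i _; exact mul_nonneg (hw0 i) (sq_nonneg _)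
    · intro i _; ring
  have hTB : D * B - C2 ≤ D^2 / 4 * A := by
    have expand : D * B - C2 = ∑ s ∈ R, w s * ((D - s) * (s:ℝ)) := by
      rw [hB, hC2, Finset.mul_sum, ← Finset.sum_sub_distrib]
      apply Finset.sum_congr rfl; intro s _; ring
    rw [expand, hA, Finset.mul_sum]
    apply Finset.sum_le_sum
    intro s hs
    have h1 : (D - s) * (s:ℝ) ≤ D^2/4 := by nlinarith [sq_nonneg (D - 2*(s:ℝ))]
    calc w s * ((D-s)*(s:ℝ)) ≤ w s * (D^2/4) := mul_le_mul_of_nonneg_left h1 (hw0 s)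
      _ = D^2/4 * w s := by ring
  -- variance bound
  have hAC : A * C2 - B^2 ≤ D * ((2:ℝ)^(e+2))^2 / 4 := by
    have d1 := double R w (fun s => D - (s:ℝ))
    have d2 := double R c (fun s => D - (s:ℝ))
    simp only [← hA, ← hB, ← hC2] at d1
    have mono : (∑ s ∈ R, ∑ t ∈ R, w s * w t * ((D - (s:ℝ)) - (D - (t:ℝ)))^2)
        ≤ ∑ s ∈ R, ∑ t ∈ R, c s * c t * ((D - (s:ℝ)) - (D - (t:ℝ)))^2 := by
      apply Finset.sum_le_sum; intro s _
      apply Finset.sum_le_sum; intro t _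
      apply mul_le_mul_of_nonneg_right _ (sq_nonneg _)
      exact mul_le_mul (hwc s) (hwc t) (hw0 t) (hc0 s)
    have pc1' : ∑ s ∈ R, (s:ℝ) * c s = D * (2:ℝ)^(e+1) := by
      have h := sumS1 (e+1)
      rw [show e + 1 + 2 = e + 3 from by omega, show e + 1 + 1 = e + 2 from by omega] at h
      have h2 : ((∑ s ∈ range (e+3), s * (e+2).choose s : ℕ) : ℝ)
          = (((e+2) * 2^(e+1) : ℕ) : ℝ) := by exact_mod_cast h
      push_cast at h2
      rw [hc, hRdef, hD]
      push_cast
      convert h2 using 2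
    have pc2' : ∑ s ∈ R, (s:ℝ) * (s:ℝ) * c s = D * (D + 1) * (2:ℝ)^e := by
      have h := sumS2 e
      have h2 : ((∑ s ∈ range (e+3), s * s * (e+2).choose s : ℕ) : ℝ)
          = (((e+2) * (e+3) * 2^e : ℕ) : ℝ) := by exact_mod_cast h
      push_cast at h2
      rw [hc, hRdef, hD]
      push_cast
      rw [h2]; ring
    have pc1 : ∑ s ∈ R, c s * (D - s) = D * (2:ℝ)^(e+1) := by
      have expand : ∑ s ∈ R, c s * (D - s)
          = D * (∑ s ∈ R, c s) - ∑ s ∈ R, (s:ℝ) * c s := by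
        rw [Finset.mul_sum, ← Finset.sum_sub_distrib]
        apply Finset.sum_congr rfl; intro s _; ring
      rw [expand, hsum, pc1']
      have : (2:ℝ)^(e+2) = 2 * 2^(e+1) := by ring
      rw [this]; ring
    have pc2 : ∑ s ∈ R, c s * (D - s)^2 = D * (D + 1) * (2:ℝ)^e := by
      have expand : ∑ s ∈ R, c s * (D - s)^2
          = D^2 * (∑ s ∈ R, c s) - 2*D*(∑ s ∈ R, (s:ℝ) * c s)
            + ∑ s ∈ R, (s:ℝ) * (s:ℝ) * c s := by
        rw [Finset.mul_sum, Finset.mul_sum, ← Finset.sum_sub_distrib, ← Finset.sum_add_distrib]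
        apply Finset.sum_congr rfl; intro s _; ring
      rw [expand, hsum, pc1', pc2']
      have h1 : (2:ℝ)^(e+2) = 4 * 2^e := by ring
      have h2 : (2:ℝ)^(e+1) = 2 * 2^e := by ring
      rw [h1, h2]; ring
    rw [pc1, pc2, hsum] at d2
    have final : 2 * (A * C2 - B^2) ≤ 2 * (D * ((2:ℝ)^(e+2))^2 / 4) := by
      rw [← d1]
      calc (∑ s ∈ R, ∑ t ∈ R, w s * w t * ((D - (s:ℝ)) - (D - (t:ℝ)))^2)
          ≤ ∑ s ∈ R, ∑ t ∈ R, c s * c t * ((D - (s:ℝ)) - (D - (t:ℝ)))^2 := mono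
        _ = 2 * ((2:ℝ)^(e+2) * (D * (D+1) * 2^e) - (D * 2^(e+1))^2) := d2
        _ = 2 * (D * ((2:ℝ)^(e+2))^2 / 4) := by
            have h1 : (2:ℝ)^(e+2) = 4 * 2^e := by ring
            have h2 : (2:ℝ)^(e+1) = 2 * 2^e := by ring
            rw [h1, h2]; ring
    linarith
  -- final assembly
  set P : ℝ := (2:ℝ)^(e+2) with hP
  have hPpos : (0:ℝ) < P := by rw [hP]; positivity
  have hα0 : α 0 = A / P := by
    rw [eq_div_iff hPpos.ne']; exact e0
  have hα1 : α 1 = B / (P * D) := by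
    rw [eq_div_iff (by positivity : P * D ≠ 0)]; exact e1
  have hα2 : α 2 = (C2 - B) / (P * (D * (D - 1))) := by
    rw [eq_div_iff (by positivity : P * (D * (D - 1)) ≠ 0)]; exact e2
  have eqn : α 1 ^ 2 - α 0 * α 2
      = (B^2*(D-1) - A*(C2 - B)*D) / (P^2 * D^2 * (D-1)) := by
    rw [hα1, hα0, hα2]
    field_simp
  have h3 : P^2 * D * (D - 2) / 4 ≥ 0 := by
    have : (0:ℝ) ≤ D - 2 := by linarith
    positivity
  have hnum : |B^2*(D-1) - A*(C2 - B)*D| ≤ P^2 * D * (D-1) / 2 := by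
    rw [abs_le]; constructor
    · have h1 : D*(A*C2 - B^2) ≤ D*(D*P^2/4) := by
        apply mul_le_mul_of_nonneg_left _ hDpos.le
        rw [hP]; exact hAC
      have h2 : B*(B - D*A) ≤ 0 :=
        mul_nonpos_of_nonneg_of_nonpos hB0 (by linarith)
      nlinarith [h1, h2, h3]
    · have h4 : B^2*(D-1) ≤ (A*C2)*(D-1) := mul_le_mul_of_nonneg_right hCS hD1.le
      have h5 : A*(D*B - C2) ≤ A*(D^2/4*A) := mul_le_mul_of_nonneg_left hTB hA0
      have h6 : D^2/4*(A*A) ≤ D^2/4*(P*P) := by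
        apply mul_le_mul_of_nonneg_left _ (by positivity)
        exact mul_le_mul hA1 hA1 hA0 hPpos.le
      nlinarith [h4, h5, h6, h3]
  rw [eqn, abs_div, abs_of_pos (show (0:ℝ) < P^2 * D^2 * (D-1) by positivity)]
  calc |B^2*(D-1) - A*(C2 - B)*D| / (P^2 * D^2 * (D-1))
      ≤ (P^2 * D * (D-1) / 2) / (P^2 * D^2 * (D-1)) :=
        div_le_div_of_nonneg_right hnum (by positivity)
    _ = 1 / (2 * D) := by
        rw [div_eq_div_iff (by positivity : (P^2 * D^2 * (D-1)) ≠ 0) (by positivity : (2*D : ℝ) ≠ 0)]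
        ring
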